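/- Fix n ≥ 1. Let Bₙ := ℂ[x_{i,r,c} : 1 ≤ i ≤ n, r,c ∈ {1,2}] / (x_{i,1,1}x_{i,2,2} - x_{i,1,2}x_{i,2,1} - 1 for each i) be the coordinate ring of SL₂(ℂ)ⁿ, where x_{i,r,c} is the (r,c) entry function of the i-th matrix. For g ∈ SL₂(ℂ) let σ_g be the ℂ-algebra automorphism of Bₙ with σ_g(x_{i,r,c}) = g_{r,1}·x_{i,1,c} + g_{r,2}·x_{i,2,c} (the action induced by simultaneous left multiplication of all n matrices by g). Order the 2n column indices (i,a) (1 ≤ i ≤ n, a ∈ {1,2}) lexicographically and for (i,a) < (j,b) set p_{(i,a),(j,b)} := x_{i,1,a}x_{j,2,b} - x_{i,2,a}x_{j,1,b} ∈ Bₙ (the determinant of column a of the i-th matrix and column b of the j-th matrix). Then the fixed subalgebra {f ∈ Bₙ : σ_g(f) = f for all g ∈ SL₂(ℂ)} is generated as a ℂ-algebra by the p_{(i,a),(j,b)}, and the kernel of the ℂ-algebra map from the polynomial ring on variables P_{(i,a),(j,b)} ((i,a) < (j,b)) to Bₙ sending P_{(i,a),(j,b)} ↦ p_{(i,a),(j,b)}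 is generated by the Plücker relations P_{(i,a),(j,b)}P_{(k,c),(l,d)} + P_{(i,a),(l,d)}P_{(j,b),(k,c)} - P_{(i,a),(k,c)}P_{(j,b),(l,d)} for (i,a) < (j,b) < (k,c) < (l,d), together with the relations P_{(i,1),(i,2)} - 1 for each i. -/

import Mathlib

open MvPolynomial

/-- Index type for the matrix entries x_{i,r,c} of n matrices: (i, r, c) with
rows/columns r, c ∈ Fin 2 (0 = first row/column, 1 = second). -/
abbrev Ent (n : ℕ) := Fin n × Fin 2 × Fin 2

/-- The determinant relation x_{i,1,1}x_{i,2,2} - x_{i,1,2}x_{i,2,1} - 1 of the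
i-th matrix. -/
noncomputable def reln (n : ℕ) (i : Fin n) : MvPolynomial (Ent n) ℂ :=
  X (i, 0, 0) * X (i, 1, 1) - X (i, 0, 1) * X (i, 1, 0) - 1

/-- The ideal of determinant relations. -/
noncomputable def In (n : ℕ) : Ideal (MvPolynomial (Ent n) ℂ) :=
  Ideal.span (Set.range (reln n))

/-- Bₙ = ℂ[SL₂(ℂ)ⁿ], the coordinate ring of n copies of SL₂(ℂ). -/
abbrev Bn (n : ℕ) := MvPolynomial (Ent n) ℂ ⧸ In n

/-- The (r,c) matrix entry function of the i-th matrix, as an element of Bₙ. -/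
noncomputable def xq (n : ℕ) (i : Fin n) (r c : Fin 2) : Bn n :=
  Ideal.Quotient.mk (In n) (X (i, r, c))

/-- The action σ_g of g ∈ SL₂(ℂ) on Bₙ induced by simultaneous left multiplication
of all n matrices by g: σ_g(x_{i,r,c}) = g_{r,1}·x_{i,1,c} + g_{r,2}·x_{i,2,c}. -/
noncomputable def act (n : ℕ) (g : Matrix.SpecialLinearGroup (Fin 2) ℂ) :
    Bn n →ₐ[ℂ] Bn n :=
  Ideal.Quotient.liftₐ (In n)
    (MvPolynomial.aeval fun p : Ent n =>
      algebraMap ℂ (Bn n) ((g : Matrix (Fin 2) (Fin 2) ℂ) p.2.1 0) * xq n p.1 0 p.2.2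
        + algebraMap ℂ (Bn n) ((g : Matrix (Fin 2) (Fin 2) ℂ) p.2.1 1) * xq n p.1 1 p.2.2)
    (by
      intro a ha
      have hle : In n ≤ RingHom.ker (MvPolynomial.aeval (R := ℂ) fun p : Ent n =>
          algebraMap ℂ (Bn n) ((g : Matrix (Fin 2) (Fin 2) ℂ) p.2.1 0) * xq n p.1 0 p.2.2
            + algebraMap ℂ (Bn n) ((g : Matrix (Fin 2) (Fin 2) ℂ) p.2.1 1)
              * xq n p.1 1 p.2.2) := by
        show Ideal.span (Set.range (reln n)) ≤ _
        rw [Ideal.span_le]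
        rintro _ ⟨i, rfl⟩
        simp only [SetLike.mem_coe, RingHom.mem_ker]
        have hdet : (g : Matrix (Fin 2) (Fin 2) ℂ) 0 0 * (g : Matrix (Fin 2) (Fin 2) ℂ) 1 1
            - (g : Matrix (Fin 2) (Fin 2) ℂ) 0 1 * (g : Matrix (Fin 2) (Fin 2) ℂ) 1 0 = 1 := by
          have hd := g.2
          rwa [Matrix.det_fin_two] at hd
        have hdet' : algebraMap ℂ (Bn n) ((g : Matrix (Fin 2) (Fin 2) ℂ) 0 0)
              * algebraMap ℂ (Bn n) ((g : Matrix (Fin 2) (Fin 2) ℂ) 1 1)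
            - algebraMap ℂ (Bn n) ((g : Matrix (Fin 2) (Fin 2) ℂ) 0 1)
              * algebraMap ℂ (Bn n) ((g : Matrix (Fin 2) (Fin 2) ℂ) 1 0) = 1 := by
          rw [← map_mul, ← map_mul, ← map_sub, hdet, map_one]
        have hrel : xq n i 0 0 * xq n i 1 1 - xq n i 0 1 * xq n i 1 0 - 1 = 0 := by
          have hm : Ideal.Quotient.mk (In n) (reln n i) = 0 :=
            Ideal.Quotient.eq_zero_iff_mem.mpr (Ideal.subset_span ⟨i, rfl⟩)
          simpa [reln, xq, map_sub, map_mul, map_one] using hm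
        simp only [reln, map_sub, map_mul, map_one, MvPolynomial.aeval_X]
        linear_combination
          (xq n i 0 0 * xq n i 1 1 - xq n i 0 1 * xq n i 1 0) * hdet' + hrel
      exact hle ha)

/-- The lexicographic position of a column index (i, a): the columns of the i-th
matrix sit at positions 2i and 2i+1. -/
def colIdx (n : ℕ) (p : Fin n × Fin 2) : ℕ := 2 * p.1.val + p.2.val

/-- Pairs of column indices (i,a) < (j,b) in the lexicographic order. -/
abbrev ColPair (n : ℕ) := {pr : (Fin n × Fin 2) × (Fin n × Fin 2) //
  colIdx n pr.1 < colIdx n pr.2}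

/-- The Plücker invariant p_{(i,a),(j,b)} = x_{i,1,a}x_{j,2,b} - x_{i,2,a}x_{j,1,b},
the determinant of column a of the i-th matrix and column b of the j-th matrix. -/
noncomputable def pluck (n : ℕ) (p q : Fin n × Fin 2) : Bn n :=
  xq n p.1 0 p.2 * xq n q.1 1 q.2 - xq n p.1 1 p.2 * xq n q.1 0 q.2

/-- The Plücker relations P_{(i,a),(j,b)}P_{(k,c),(l,d)} +
P_{(i,a),(l,d)}P_{(j,b),(k,c)} - P_{(i,a),(k,c)}P_{(j,b),(l,d)} for
(i,a) < (j,b) < (k,c) < (l,d). -/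
def plueckerRels (n : ℕ) : Set (MvPolynomial (ColPair n) ℂ) :=
  {r | ∃ (c1 c2 c3 c4 : Fin n × Fin 2) (h12 : colIdx n c1 < colIdx n c2)
        (h23 : colIdx n c2 < colIdx n c3) (h34 : colIdx n c3 < colIdx n c4),
      r = X (⟨(c1, c2), h12⟩ : ColPair n) * X (⟨(c3, c4), h34⟩ : ColPair n)
          + X (⟨(c1, c4), Nat.lt_trans h12 (Nat.lt_trans h23 h34)⟩ : ColPair n)
              * X (⟨(c2, c3), h23⟩ : ColPair n)
          - X (⟨(c1, c3), Nat.lt_trans h12 h23⟩ : ColPair n)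
              * X (⟨(c2, c4), Nat.lt_trans h23 h34⟩ : ColPair n)}

/-- The relations P_{(i,1),(i,2)} - 1 for each i. -/
def unitRels (n : ℕ) : Set (MvPolynomial (ColPair n) ℂ) :=
  {r | ∃ i : Fin n,
      r = X (⟨((i, 0), (i, 1)), by simp only [colIdx, Fin.val_zero, Fin.val_one]; omega⟩ :
          ColPair n) - 1}

/-! ### Auxiliary infrastructure -/

section Aux

lemma hrelB (n : ℕ) (i : Fin n) :
    xq n i 0 0 * xq n i 1 1 - xq n i 0 1 * xq n i 1 0 = 1 := by
  have hm : Ideal.Quotient.mk (In n) (reln n i) = 0 :=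
    Ideal.Quotient.eq_zero_iff_mem.mpr (Ideal.subset_span ⟨i, rfl⟩)
  have h2 : xq n i 0 0 * xq n i 1 1 - xq n i 0 1 * xq n i 1 0 - 1 = 0 := by
    simpa [reln, xq, map_sub, map_mul, map_one] using hm
  linear_combination h2

/-- 2×2 "determinant" expression. -/
def detEq {R : Type*} [CommRing R] (M : Matrix (Fin 2) (Fin 2) R) : R :=
  M 0 0 * M 1 1 - M 0 1 * M 1 0

lemma detEq_mul {R : Type*} [CommRing R] (M N : Matrix (Fin 2) (Fin 2) R) :
    detEq (M * N) = detEq M * detEq N := by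
  simp only [detEq, Matrix.mul_apply, Fin.sum_univ_two]
  ring

lemma detEq_map {R R' : Type*} [CommRing R] [CommRing R'] {F : Type*} [FunLike F R R']
    [RingHomClass F R R'] (χ : F)
    (M : Matrix (Fin 2) (Fin 2) R) (hM : detEq M = 1) : detEq (M.map χ) = 1 := by
  have := congrArg χ hM
  simpa [detEq, Matrix.map_apply, map_sub, map_mul] using this

/-- Substitution action: given an algebra map `ψ : Bn n →ₐ[ℂ] R` and a 2×2 matrix `M`
over `R` with determinant 1, the algebra map sending `x_{i,r,c}` to
`M r 0 * ψ x_{i,0,c} + M r 1 * ψ x_{i,1,c}`. -/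
noncomputable def twist {n : ℕ} {R : Type*} [CommRing R] [Algebra ℂ R]
    (ψ : Bn n →ₐ[ℂ] R) (M : Matrix (Fin 2) (Fin 2) R) (hM : detEq M = 1) :
    Bn n →ₐ[ℂ] R :=
  Ideal.Quotient.liftₐ (In n)
    (MvPolynomial.aeval fun p : Ent n =>
      M p.2.1 0 * ψ (xq n p.1 0 p.2.2) + M p.2.1 1 * ψ (xq n p.1 1 p.2.2))
    (by
      intro a ha
      have hle : In n ≤ RingHom.ker (MvPolynomial.aeval (R := ℂ) fun p : Ent n =>
          M p.2.1 0 * ψ (xq n p.1 0 p.2.2) + M p.2.1 1 * ψ (xq n p.1 1 p.2.2)) := by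
        show Ideal.span (Set.range (reln n)) ≤ _
        rw [Ideal.span_le]
        rintro _ ⟨i, rfl⟩
        simp only [SetLike.mem_coe, RingHom.mem_ker]
        have hψ : ψ (xq n i 0 0) * ψ (xq n i 1 1) - ψ (xq n i 0 1) * ψ (xq n i 1 0) = 1 := by
          rw [← map_mul, ← map_mul, ← map_sub, hrelB, map_one]
        have hM' : M 0 0 * M 1 1 - M 0 1 * M 1 0 = 1 := hM
        simp only [reln, map_sub, map_mul, map_one, MvPolynomial.aeval_X]
        linear_combination
          (ψ (xq n i 0 0) * ψ (xq n i 1 1) - ψ (xq n i 0 1) * ψ (xq n i 1 0)) * hM' + hψ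
      exact hle ha)

lemma twist_xq {n : ℕ} {R : Type*} [CommRing R] [Algebra ℂ R]
    (ψ : Bn n →ₐ[ℂ] R) (M : Matrix (Fin 2) (Fin 2) R) (hM : detEq M = 1)
    (i : Fin n) (r c : Fin 2) :
    twist ψ M hM (xq n i r c) = M r 0 * ψ (xq n i 0 c) + M r 1 * ψ (xq n i 1 c) := by
  simp [twist, xq, Ideal.Quotient.liftₐ_apply, Ideal.Quotient.lift_mk]
  exact (Ideal.Quotient.lift_mk _ _ _).trans (by simp)

lemma algHom_ext_xq {n : ℕ} {R : Type*} [CommRing R] [Algebra ℂ R]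
    {f g : Bn n →ₐ[ℂ] R} (h : ∀ (i : Fin n) (r c : Fin 2), f (xq n i r c) = g (xq n i r c)) :
    f = g := by
  apply Ideal.Quotient.algHom_ext
  apply MvPolynomial.algHom_ext
  rintro ⟨i, r, c⟩
  simpa [xq, Ideal.Quotient.mkₐ_eq_mk] using h i r c

lemma twist_twist {n : ℕ} {R : Type*} [CommRing R] [Algebra ℂ R]
    (ψ : Bn n →ₐ[ℂ] R) (M N : Matrix (Fin 2) (Fin 2) R)
    (hM : detEq M = 1) (hN : detEq N = 1) (hNM : detEq (N * M) = 1) :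
    twist (twist ψ M hM) N hN = twist ψ (N * M) hNM := by
  apply algHom_ext_xq
  intro i r c
  simp only [twist_xq, Matrix.mul_apply, Fin.sum_univ_two]
  ring

lemma twist_comp {n : ℕ} {R R' : Type*} [CommRing R] [CommRing R']
    [Algebra ℂ R] [Algebra ℂ R'] (χ : R →ₐ[ℂ] R') (ψ : Bn n →ₐ[ℂ] R)
    (M : Matrix (Fin 2) (Fin 2) R) (hM : detEq M = 1)
    (hM' : detEq (M.map χ) = 1) :
    χ.comp (twist ψ M hM) = twist (χ.comp ψ) (M.map χ) hM' := by
  apply algHom_ext_xq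
  intro i r c
  simp [twist_xq, Matrix.map_apply]

lemma twist_congr {n : ℕ} {R : Type*} [CommRing R] [Algebra ℂ R]
    (ψ : Bn n →ₐ[ℂ] R) {M M' : Matrix (Fin 2) (Fin 2) R} (h : M = M')
    (hM : detEq M = 1) (hM' : detEq M' = 1) :
    twist ψ M hM = twist ψ M' hM' := by subst h; rfl

lemma act_xq {n : ℕ} (g : Matrix.SpecialLinearGroup (Fin 2) ℂ) (i : Fin n) (r c : Fin 2) :
    act n g (xq n i r c)
      = algebraMap ℂ (Bn n) ((g : Matrix (Fin 2) (Fin 2) ℂ) r 0) * xq n i 0 c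
        + algebraMap ℂ (Bn n) ((g : Matrix (Fin 2) (Fin 2) ℂ) r 1) * xq n i 1 c := by
  simp [act, xq, Ideal.Quotient.liftₐ_apply, Ideal.Quotient.lift_mk]
  exact (Ideal.Quotient.lift_mk _ _ _).trans (by simp)

lemma detEq_g {n : ℕ} (g : Matrix.SpecialLinearGroup (Fin 2) ℂ) :
    detEq ((g : Matrix (Fin 2) (Fin 2) ℂ).map (algebraMap ℂ (Bn n))) = 1 := by
  apply detEq_map
  have hd := g.2
  rw [Matrix.det_fin_two] at hd
  exact hd

lemma act_eq_twist {n : ℕ} (g : Matrix.SpecialLinearGroup (Fin 2) ℂ) :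
    act n g = twist (AlgHom.id ℂ (Bn n))
      ((g : Matrix (Fin 2) (Fin 2) ℂ).map (algebraMap ℂ (Bn n))) (detEq_g g) := by
  apply algHom_ext_xq
  intro i r c
  simp [act_xq, twist_xq, Matrix.map_apply]

/-- A polynomial over a ℂ-algebra vanishing at every complex scalar is zero. -/
lemma poly_eval_zero {B' : Type*} [CommRing B'] [Algebra ℂ B'] (q : Polynomial B')
    (h : ∀ t : ℂ, Polynomial.eval (algebraMap ℂ B' t) q = 0) : q = 0 := by
  classical
  ext k
  rw [Polynomial.coeff_zero]
  by_cases hk : k ≤ q.natDegree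
  · rw [← Module.forall_dual_apply_eq_zero_iff ℂ]
    intro φ
    set d := q.natDegree with hd
    set p' : Polynomial ℂ :=
      ∑ j ∈ Finset.range (d + 1), Polynomial.C (φ (q.coeff j)) * Polynomial.X ^ j with hp'
    have hp'eval : ∀ t : ℂ, p'.eval t = 0 := by
      intro t
      have he : Polynomial.eval (algebraMap ℂ B' t) q
          = ∑ j ∈ Finset.range (d + 1), q.coeff j * (algebraMap ℂ B' t) ^ j :=
        Polynomial.eval_eq_sum_range _
      have : p'.eval t = φ (∑ j ∈ Finset.range (d + 1), q.coeff j * (algebraMap ℂ B' t) ^ j) := by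
        rw [map_sum, hp', Polynomial.eval_finset_sum]
        apply Finset.sum_congr rfl
        intro j _
        rw [Polynomial.eval_mul, Polynomial.eval_pow, Polynomial.eval_X, Polynomial.eval_C,
          mul_comm (q.coeff j), ← map_pow, ← Algebra.smul_def, map_smul, smul_eq_mul, mul_comm]
      rw [this, ← he, h t, map_zero]
    have hp0 : p' = 0 := Polynomial.funext fun r => by simp [hp'eval r]
    have := congrArg (fun p => Polynomial.coeff p k) hp0
    simp only [hp', Polynomial.finset_sum_coeff, Polynomial.coeff_C_mul,
      Polynomial.coeff_X_pow, Polynomial.coeff_zero, mul_ite, mul_one, mul_zero] at this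
    rwa [Finset.sum_ite_eq (Finset.range (d + 1)) k (fun j => φ (q.coeff j)),
      if_pos (Finset.mem_range.mpr (by omega))] at this
  · exact Polynomial.coeff_eq_zero_of_natDegree_lt (by omega)

/-- Upper and lower elementary 2×2 matrices. -/
def Em {R : Type*} [CommRing R] (u : R) : Matrix (Fin 2) (Fin 2) R := !![1, u; 0, 1]

def Fm {R : Type*} [CommRing R] (u : R) : Matrix (Fin 2) (Fin 2) R := !![1, 0; u, 1]

lemma detEq_Em {R : Type*} [CommRing R] (u : R) : detEq (Em u) = 1 := by
  simp [detEq, Em]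

lemma detEq_Fm {R : Type*} [CommRing R] (u : R) : detEq (Fm u) = 1 := by
  simp [detEq, Fm]

set_option maxHeartbeats 2000000 in
lemma twist_Em_invariant {n : ℕ} {f : Bn n}
    (hf : ∀ g : Matrix.SpecialLinearGroup (Fin 2) ℂ, act n g f = f)
    {R : Type*} [CommRing R] [Algebra ℂ R] (χ : Bn n →ₐ[ℂ] R) (u : R) :
    twist χ (Em u) (detEq_Em u) f = χ f := by
  classical
  set CB : Bn n →ₐ[ℂ] Polynomial (Bn n) := Polynomial.CAlgHom with hCB
  have hdet : detEq (Em (Polynomial.X : Polynomial (Bn n))) = 1 := detEq_Em _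
  set P : Polynomial (Bn n) := twist CB (Em Polynomial.X) hdet f with hP
  have hPC : P = Polynomial.C f := by
    have hz : ∀ t : ℂ, Polynomial.eval (algebraMap ℂ (Bn n) t) (P - Polynomial.C f) = 0 := by
      intro t
      set evt : Polynomial (Bn n) →ₐ[ℂ] Bn n :=
        (Polynomial.aeval (R := Bn n) (algebraMap ℂ (Bn n) t)).restrictScalars ℂ with hevt
      have hmapdet : detEq ((Em (Polynomial.X : Polynomial (Bn n))).map evt) = 1 :=
        detEq_map evt _ hdet
      have h1 : evt.comp (twist CB (Em Polynomial.X) hdet)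
          = twist (evt.comp CB) ((Em Polynomial.X).map evt) hmapdet :=
        twist_comp evt CB _ hdet hmapdet
      have h2 : evt.comp CB = AlgHom.id ℂ (Bn n) := by
        apply AlgHom.ext
        intro b
        simp [hevt, hCB]
      set g : Matrix.SpecialLinearGroup (Fin 2) ℂ :=
        ⟨!![1, t; 0, 1], by simp [Matrix.det_fin_two_of]⟩ with hg
      have h3 : ((g : Matrix (Fin 2) (Fin 2) ℂ).map (algebraMap ℂ (Bn n)))
          = (Em (Polynomial.X : Polynomial (Bn n))).map evt := by
        ext i j
        fin_cases i <;> fin_cases j <;>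
          simp [hg, Em, Matrix.map_apply, hevt]
      have h4 : evt P = f := by
        have h6 := congrArg (fun ψ => ψ f) h1
        simp only [AlgHom.comp_apply] at h6
        rw [hP, h6]
        have h5 : twist (evt.comp CB) ((Em Polynomial.X).map ⇑evt) hmapdet
            = act n g := by
          rw [act_eq_twist g, h2]
          exact (twist_congr _ h3 (detEq_g g) hmapdet).symm
        rw [h5, hf g]
      have : Polynomial.eval (algebraMap ℂ (Bn n) t) P = f := by
        simpa [hevt, Polynomial.aeval_def, Polynomial.eval₂_eq_eval_map,
          Polynomial.eval_map] using h4
      simp [Polynomial.eval_sub, this]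
    exact sub_eq_zero.mp (poly_eval_zero _ hz)
  -- specialize the generic parameter to u
  set φ : Polynomial (Bn n) →ₐ[ℂ] R :=
    Polynomial.eval₂AlgHom χ u (fun a => Commute.all _ _) with hφ
  have hφX : φ (Polynomial.X) = u := by
    simp [hφ, Polynomial.eval₂AlgHom_apply]
  have hφC : ∀ b, φ (Polynomial.C b) = χ b := by
    intro b; simp [hφ, Polynomial.eval₂AlgHom_apply]
  have hmapdet : detEq ((Em (Polynomial.X : Polynomial (Bn n))).map φ) = 1 :=
    detEq_map φ _ hdet
  have h1 : φ.comp (twist CB (Em Polynomial.X) hdet)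
      = twist (φ.comp CB) ((Em Polynomial.X).map φ) hmapdet :=
    twist_comp φ CB _ hdet hmapdet
  have h2 : φ.comp CB = χ := by
    apply AlgHom.ext
    intro b
    simp only [AlgHom.comp_apply, hCB, Polynomial.CAlgHom_apply]
    exact hφC b
  have h3 : (Em (Polynomial.X : Polynomial (Bn n))).map φ = Em u := by
    ext i j
    fin_cases i <;> fin_cases j <;> simp [Em, Matrix.map_apply, hφX]
  have h5 : twist χ (Em u) (detEq_Em u)
      = twist (φ.comp CB) ((Em Polynomial.X).map ⇑φ) hmapdet := by
    rw [h2]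
    exact (twist_congr χ h3 hmapdet (detEq_Em u)).symm
  rw [h5]
  have h6 := congrArg (fun ψ => ψ f) h1
  simp only [AlgHom.comp_apply] at h6
  rw [← h6, ← hP, hPC]
  exact hφC f

set_option maxHeartbeats 2000000 in
lemma twist_Fm_invariant {n : ℕ} {f : Bn n}
    (hf : ∀ g : Matrix.SpecialLinearGroup (Fin 2) ℂ, act n g f = f)
    {R : Type*} [CommRing R] [Algebra ℂ R] (χ : Bn n →ₐ[ℂ] R) (u : R) :
    twist χ (Fm u) (detEq_Fm u) f = χ f := by
  classical
  set CB : Bn n →ₐ[ℂ] Polynomial (Bn n) := Polynomial.CAlgHom with hCB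
  have hdet : detEq (Fm (Polynomial.X : Polynomial (Bn n))) = 1 := detEq_Fm _
  set P : Polynomial (Bn n) := twist CB (Fm Polynomial.X) hdet f with hP
  have hPC : P = Polynomial.C f := by
    have hz : ∀ t : ℂ, Polynomial.eval (algebraMap ℂ (Bn n) t) (P - Polynomial.C f) = 0 := by
      intro t
      set evt : Polynomial (Bn n) →ₐ[ℂ] Bn n :=
        (Polynomial.aeval (R := Bn n) (algebraMap ℂ (Bn n) t)).restrictScalars ℂ with hevt
      have hmapdet : detEq ((Fm (Polynomial.X : Polynomial (Bn n))).map ⇑evt) = 1 :=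
        detEq_map evt _ hdet
      have h1 : evt.comp (twist CB (Fm Polynomial.X) hdet)
          = twist (evt.comp CB) ((Fm Polynomial.X).map ⇑evt) hmapdet :=
        twist_comp evt CB _ hdet hmapdet
      have h2 : evt.comp CB = AlgHom.id ℂ (Bn n) := by
        apply AlgHom.ext
        intro b
        simp [hevt, hCB]
      set g : Matrix.SpecialLinearGroup (Fin 2) ℂ :=
        ⟨!![1, 0; t, 1], by simp [Matrix.det_fin_two_of]⟩ with hg
      have h3 : ((g : Matrix (Fin 2) (Fin 2) ℂ).map (algebraMap ℂ (Bn n)))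
          = (Fm (Polynomial.X : Polynomial (Bn n))).map ⇑evt := by
        ext i j
        fin_cases i <;> fin_cases j <;>
          simp [hg, Fm, Matrix.map_apply, hevt]
      have h4 : evt P = f := by
        have h6 := congrArg (fun ψ => ψ f) h1
        simp only [AlgHom.comp_apply] at h6
        rw [hP, h6]
        have h5 : twist (evt.comp CB) ((Fm Polynomial.X).map ⇑evt) hmapdet
            = act n g := by
          rw [act_eq_twist g, h2]
          exact (twist_congr _ h3 (detEq_g g) hmapdet).symm
        rw [h5, hf g]
      have : Polynomial.eval (algebraMap ℂ (Bn n) t) P = f := by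
        simpa [hevt, Polynomial.aeval_def, Polynomial.eval₂_eq_eval_map,
          Polynomial.eval_map] using h4
      simp [Polynomial.eval_sub, this]
    exact sub_eq_zero.mp (poly_eval_zero _ hz)
  set φ : Polynomial (Bn n) →ₐ[ℂ] R :=
    Polynomial.eval₂AlgHom χ u (fun a => Commute.all _ _) with hφ
  have hφX : φ (Polynomial.X) = u := by
    simp [hφ, Polynomial.eval₂AlgHom_apply]
  have hφC : ∀ b, φ (Polynomial.C b) = χ b := by
    intro b; simp [hφ, Polynomial.eval₂AlgHom_apply]
  have hmapdet : detEq ((Fm (Polynomial.X : Polynomial (Bn n))).map ⇑φ) = 1 :=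
    detEq_map φ _ hdet
  have h1 : φ.comp (twist CB (Fm Polynomial.X) hdet)
      = twist (φ.comp CB) ((Fm Polynomial.X).map ⇑φ) hmapdet :=
    twist_comp φ CB _ hdet hmapdet
  have h2 : φ.comp CB = χ := by
    apply AlgHom.ext
    intro b
    simp only [AlgHom.comp_apply, hCB, Polynomial.CAlgHom_apply]
    exact hφC b
  have h3 : (Fm (Polynomial.X : Polynomial (Bn n))).map ⇑φ = Fm u := by
    ext i j
    fin_cases i <;> fin_cases j <;> simp [Fm, Matrix.map_apply, hφX]
  have h5 : twist χ (Fm u) (detEq_Fm u)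
      = twist (φ.comp CB) ((Fm Polynomial.X).map ⇑φ) hmapdet := by
    rw [h2]
    exact (twist_congr χ h3 hmapdet (detEq_Fm u)).symm
  rw [h5]
  have h6 := congrArg (fun ψ => ψ f) h1
  simp only [AlgHom.comp_apply] at h6
  rw [← h6, ← hP, hPC]
  exact hφC f

/-- Factorization of a det-1 matrix with invertible top-right entry into elementaries. -/
lemma factor_beta {R : Type*} [CommRing R] (M : Matrix (Fin 2) (Fin 2) R)
    (hM : detEq M = 1) (β' : R) (hβ : M 0 1 * β' = 1) :
    M = Fm ((M 1 1 - 1) * β') * (Em (M 0 1) * Fm ((M 0 0 - 1) * β')) := by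
  have hM' : M 0 0 * M 1 1 - M 0 1 * M 1 0 = 1 := hM
  ext i j
  fin_cases i <;> fin_cases j
  · simp [Fin.mk_zero, Fin.mk_one, Em, Fm, Matrix.mul_apply, Fin.sum_univ_two]
    linear_combination (-(M 0 0 - 1)) * hβ
  · simp [Fin.mk_zero, Fin.mk_one, Em, Fm, Matrix.mul_apply, Fin.sum_univ_two]
  · simp [Fin.mk_zero, Fin.mk_one, Em, Fm, Matrix.mul_apply, Fin.sum_univ_two]
    linear_combination (-((M 1 1 - 1) * (M 0 0 - 1) * β' + M 1 0)) * hβ - β' * hM'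
  · simp [Fin.mk_zero, Fin.mk_one, Em, Fm, Matrix.mul_apply, Fin.sum_univ_two]
    linear_combination (-(M 1 1 - 1)) * hβ

/-- Factorization of a det-1 matrix with invertible bottom-right entry into elementaries. -/
lemma factor_delta {R : Type*} [CommRing R] (M : Matrix (Fin 2) (Fin 2) R)
    (hM : detEq M = 1) (δ' : R) (hδ : M 1 1 * δ' = 1) :
    M = Em (M 0 0 + M 0 1 * ((1 - M 1 0) * δ') - 1)
        * (Fm 1 * (Em (M 1 1 - 1) * Fm (-((1 - M 1 0) * δ')))) := by
  have hM' : M 0 0 * M 1 1 - M 0 1 * M 1 0 = 1 := hM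
  ext i j
  fin_cases i <;> fin_cases j
  · simp [Fin.mk_zero, Fin.mk_one, Em, Fm, Matrix.mul_apply, Fin.sum_univ_two]
    linear_combination ((1 - M 1 0) * δ') * hM'
      + ((1 - M 1 0) * δ' * M 0 1 * (1 - M 1 0)) * hδ
  · simp [Fin.mk_zero, Fin.mk_one, Em, Fm, Matrix.mul_apply, Fin.sum_univ_two]
    linear_combination (-1) * hM' - (M 0 1 * (1 - M 1 0)) * hδ
  · simp [Fin.mk_zero, Fin.mk_one, Em, Fm, Matrix.mul_apply, Fin.sum_univ_two]
    linear_combination (1 - M 1 0) * hδ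
  · simp [Fin.mk_zero, Fin.mk_one, Em, Fm, Matrix.mul_apply, Fin.sum_univ_two]

/-- Invariance under a twist by any det-1 matrix with invertible top-right entry. -/
lemma twist_inv_unit01 {n : ℕ} {f : Bn n}
    (hf : ∀ g : Matrix.SpecialLinearGroup (Fin 2) ℂ, act n g f = f)
    {R : Type*} [CommRing R] [Algebra ℂ R] (χ : Bn n →ₐ[ℂ] R)
    (M : Matrix (Fin 2) (Fin 2) R) (hM : detEq M = 1) (hu : IsUnit (M 0 1)) :
    twist χ M hM f = χ f := by
  obtain ⟨v, hv⟩ := hu.exists_right_inv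
  set u1 := (M 1 1 - 1) * v
  set u2 := M 0 1
  set u3 := (M 0 0 - 1) * v
  have hfac : M = Fm u1 * (Em u2 * Fm u3) := factor_beta M hM v hv
  have h23 : detEq (Em u2 * Fm u3) = 1 := by
    rw [detEq_mul, detEq_Em, detEq_Fm, one_mul]
  have hM2 : detEq (Fm u1 * (Em u2 * Fm u3)) = 1 := by
    rw [detEq_mul, detEq_Fm, h23, one_mul]
  calc twist χ M hM f = twist χ (Fm u1 * (Em u2 * Fm u3)) hM2 f := by
        rw [twist_congr χ hfac hM hM2]
    _ = twist (twist χ (Em u2 * Fm u3) h23) (Fm u1) (detEq_Fm u1) f := by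
        rw [twist_twist]
    _ = twist χ (Em u2 * Fm u3) h23 f := twist_Fm_invariant hf _ u1
    _ = twist (twist χ (Fm u3) (detEq_Fm u3)) (Em u2) (detEq_Em u2) f := by
        rw [twist_twist]
    _ = twist χ (Fm u3) (detEq_Fm u3) f := twist_Em_invariant hf _ u2
    _ = χ f := twist_Fm_invariant hf χ u3

/-- Invariance under a twist by any det-1 matrix with invertible bottom-right entry. -/
lemma twist_inv_unit11 {n : ℕ} {f : Bn n}
    (hf : ∀ g : Matrix.SpecialLinearGroup (Fin 2) ℂ, act n g f = f)
    {R : Type*} [CommRing R] [Algebra ℂ R] (χ : Bn n →ₐ[ℂ] R)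
    (M : Matrix (Fin 2) (Fin 2) R) (hM : detEq M = 1) (hu : IsUnit (M 1 1)) :
    twist χ M hM f = χ f := by
  obtain ⟨v, hv⟩ := hu.exists_right_inv
  set u1 := M 0 0 + M 0 1 * ((1 - M 1 0) * v) - 1
  set u2 := (1 : R)
  set u3 := M 1 1 - 1
  set u4 := -((1 - M 1 0) * v)
  have hfac : M = Em u1 * (Fm u2 * (Em u3 * Fm u4)) := factor_delta M hM v hv
  have h34 : detEq (Em u3 * Fm u4) = 1 := by
    rw [detEq_mul, detEq_Em, detEq_Fm, one_mul]
  have h234 : detEq (Fm u2 * (Em u3 * Fm u4)) = 1 := by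
    rw [detEq_mul, detEq_Fm, h34, one_mul]
  have hM2 : detEq (Em u1 * (Fm u2 * (Em u3 * Fm u4))) = 1 := by
    rw [detEq_mul, detEq_Em, h234, one_mul]
  calc twist χ M hM f = twist χ (Em u1 * (Fm u2 * (Em u3 * Fm u4))) hM2 f := by
        rw [twist_congr χ hfac hM hM2]
    _ = twist (twist χ (Fm u2 * (Em u3 * Fm u4)) h234) (Em u1) (detEq_Em u1) f := by
        rw [twist_twist]
    _ = twist χ (Fm u2 * (Em u3 * Fm u4)) h234 f := twist_Em_invariant hf _ u1
    _ = twist (twist χ (Em u3 * Fm u4) h34) (Fm u2) (detEq_Fm u2) f := by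
        rw [twist_twist]
    _ = twist χ (Em u3 * Fm u4) h34 f := twist_Fm_invariant hf _ u2
    _ = twist (twist χ (Fm u4) (detEq_Fm u4)) (Em u3) (detEq_Em u3) f := by
        rw [twist_twist]
    _ = twist χ (Fm u4) (detEq_Fm u4) f := twist_Em_invariant hf _ u3
    _ = χ f := twist_Fm_invariant hf χ u4

/-- If `a^k * z = 0` and `b^l * z = 0` and `a d + b c = 1` then `z = 0`. -/
lemma ann_of_pows {S : Type*} [CommRing S] {a b z : S} (d c : S)
    (hone : a * d + b * c = 1)
    {k l : ℕ} (hk : a ^ k * z = 0) (hl : b ^ l * z = 0) : z = 0 := by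
  have h1 : (a * d + b * c) ^ (k + l) * z = z := by rw [hone, one_pow, one_mul]
  rw [← h1, add_pow, Finset.sum_mul]
  apply Finset.sum_eq_zero
  intro i hi
  rcases le_or_gt k i with h | h
  · obtain ⟨j, rfl⟩ := Nat.exists_eq_add_of_le h
    linear_combination (d ^ (k + j) * a ^ j * (b * c) ^ (k + l - (k + j))
      * (((k + l).choose (k + j) : ℕ) : S)) * hk
  · obtain ⟨j, hj⟩ : ∃ j, k + l - i = l + j := ⟨k - i, by omega⟩
    rw [hj]
    linear_combination ((a * d) ^ i * b ^ j * c ^ (l + j)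
      * (((k + l).choose i : ℕ) : S)) * hl

/-- If `C z` is divisible by `C w * X - 1`, then `z` is annihilated by a power of `w`. -/
lemma pow_ann_of_dvd {S : Type*} [CommRing S] (w z : S)
    (h : ∃ q : Polynomial S, Polynomial.C z = (Polynomial.C w * Polynomial.X - 1) * q) :
    ∃ k : ℕ, w ^ k * z = 0 := by
  obtain ⟨q, hq⟩ := h
  rw [show (Polynomial.C w * Polynomial.X - 1) * q
      = Polynomial.C w * (Polynomial.X * q) - q by ring] at hq
  have hco : ∀ i, q.coeff i = -(w ^ i * z) := by
    intro i
    induction i with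
    | zero =>
      have h0 := congrArg (fun p => Polynomial.coeff p 0) hq
      simp only [Polynomial.coeff_C, eq_self_iff_true, if_true, Polynomial.coeff_sub,
        Polynomial.coeff_C_mul, Polynomial.mul_coeff_zero, Polynomial.coeff_X_zero,
        zero_mul, mul_zero, zero_sub, ite_true] at h0
      rw [pow_zero, one_mul]
      linear_combination h0
    | succ i ih =>
      have h0 := congrArg (fun p => Polynomial.coeff p (i + 1)) hq
      simp only [Polynomial.coeff_C, if_neg (Nat.succ_ne_zero i), Polynomial.coeff_sub,
        Polynomial.coeff_C_mul, Polynomial.coeff_X_mul] at h0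
      rw [pow_succ]
      linear_combination h0 + w * ih
  refine ⟨q.natDegree + 1, ?_⟩
  have h1 := hco (q.natDegree + 1)
  rw [Polynomial.coeff_natDegree_succ_eq_zero] at h1
  linear_combination h1

/-- The matrix `adj C₀ = C₀⁻¹` over `Bn n`. -/
noncomputable def M0 (n : ℕ) (hn : 1 ≤ n) : Matrix (Fin 2) (Fin 2) (Bn n) :=
  !![xq n ⟨0, hn⟩ 1 1, -xq n ⟨0, hn⟩ 0 1; -xq n ⟨0, hn⟩ 1 0, xq n ⟨0, hn⟩ 0 0]

lemma detEq_M0 (n : ℕ) (hn : 1 ≤ n) : detEq (M0 n hn) = 1 := by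
  simp only [detEq, M0, Matrix.of_apply, Matrix.cons_val', Matrix.cons_val_zero,
    Matrix.cons_val_one, Matrix.head_cons, Matrix.empty_val', Matrix.cons_val_fin_one,
    Matrix.head_fin_const]
  linear_combination hrelB n ⟨0, hn⟩

/-- The "trivialization" endomorphism of `Bn n` (substitute `Cᵢ ↦ C₀⁻¹ Cᵢ`). -/
noncomputable def Ee (n : ℕ) (hn : 1 ≤ n) : Bn n →ₐ[ℂ] Bn n :=
  twist (AlgHom.id ℂ (Bn n)) (M0 n hn) (detEq_M0 n hn)

set_option maxHeartbeats 1000000 in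
/-- Key step: the trivialization endomorphism fixes every invariant element. -/
lemma Ee_fixed {n : ℕ} (hn : 1 ≤ n) {f : Bn n}
    (hf : ∀ g : Matrix.SpecialLinearGroup (Fin 2) ℂ, act n g f = f) :
    Ee n hn f = f := by
  set a := xq n ⟨0, hn⟩ 0 0 with ha
  set b := xq n ⟨0, hn⟩ 0 1 with hb
  set z := Ee n hn f - f with hz
  have key : ∀ w : Bn n, ((M0 n hn) 0 1 = -w ∨ (M0 n hn) 1 1 = w) →
      ∃ k : ℕ, w ^ k * z = 0 := by
    intro w hw
    letI : CommRing (Polynomial (Bn n)) := Polynomial.commRing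
    set J : Ideal (Polynomial (Bn n)) :=
      Ideal.span {Polynomial.C w * Polynomial.X - 1} with hJ
    set ψ : Bn n →ₐ[ℂ] (Polynomial (Bn n) ⧸ J) :=
      (Ideal.Quotient.mkₐ ℂ J).comp Polynomial.CAlgHom with hψ
    have hmkX : ψ w * Ideal.Quotient.mk J Polynomial.X = 1 := by
      have hmem : Polynomial.C w * Polynomial.X - 1 ∈ J :=
        Ideal.subset_span (Set.mem_singleton _)
      have h0 : Ideal.Quotient.mk J (Polynomial.C w * Polynomial.X - 1) = 0 :=
        Ideal.Quotient.eq_zero_iff_mem.mpr hmem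
      have : ψ w = Ideal.Quotient.mk J (Polynomial.C w) := rfl
      rw [this, ← map_mul]
      rw [map_sub, map_one] at h0
      linear_combination h0
    have hwunit : IsUnit (ψ w) := IsUnit.of_mul_eq_one _ hmkX
    have hmapdet : detEq ((M0 n hn).map ⇑ψ) = 1 := detEq_map ψ _ (detEq_M0 n hn)
    have hcomp : ψ.comp (Ee n hn) = twist ψ ((M0 n hn).map ⇑ψ) hmapdet := by
      have h := twist_comp ψ (AlgHom.id ℂ (Bn n)) (M0 n hn) (detEq_M0 n hn) hmapdet
      rw [AlgHom.comp_id] at h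
      exact h
    have h1 : ψ (Ee n hn f) = ψ f := by
      have h2 := congrArg (fun ϕ => ϕ f) hcomp
      simp only [AlgHom.comp_apply] at h2
      rw [h2]
      rcases hw with hc | hc
      · refine twist_inv_unit01 hf ψ _ hmapdet ?_
        rw [Matrix.map_apply, hc, map_neg]
        exact hwunit.neg
      · refine twist_inv_unit11 hf ψ _ hmapdet ?_
        rw [Matrix.map_apply, hc]
        exact hwunit
    have h3 : ψ z = 0 := by
      rw [hz, map_sub, h1, sub_self]
    have h4 : Polynomial.C z ∈ J := by
      rw [← Ideal.Quotient.eq_zero_iff_mem]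
      exact h3
    rw [hJ, Ideal.mem_span_singleton'] at h4
    obtain ⟨q, hq⟩ := h4
    exact pow_ann_of_dvd w z ⟨q, by rw [← hq]; ring⟩
  have hza : ∃ k : ℕ, a ^ k * z = 0 := key a (Or.inr rfl)
  have hzb : ∃ k : ℕ, b ^ k * z = 0 := key b (Or.inl rfl)
  obtain ⟨k, hk⟩ := hza
  obtain ⟨l, hl⟩ := hzb
  have hone : a * xq n ⟨0, hn⟩ 1 1 + b * (-xq n ⟨0, hn⟩ 1 0) = 1 := by
    have := hrelB n ⟨0, hn⟩
    linear_combination this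
  have : z = 0 := ann_of_pows _ _ hone hk hl
  rw [hz] at this
  linear_combination this

/-- The Plücker invariants are invariant under the action. -/
lemma act_pluck {n : ℕ} (g : Matrix.SpecialLinearGroup (Fin 2) ℂ) (u v : Fin n × Fin 2) :
    act n g (pluck n u v) = pluck n u v := by
  have hdet : (g : Matrix (Fin 2) (Fin 2) ℂ) 0 0 * (g : Matrix (Fin 2) (Fin 2) ℂ) 1 1
      - (g : Matrix (Fin 2) (Fin 2) ℂ) 0 1 * (g : Matrix (Fin 2) (Fin 2) ℂ) 1 0 = 1 := by
    have hd := g.2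
    rwa [Matrix.det_fin_two] at hd
  have hdet' : algebraMap ℂ (Bn n) ((g : Matrix (Fin 2) (Fin 2) ℂ) 0 0)
        * algebraMap ℂ (Bn n) ((g : Matrix (Fin 2) (Fin 2) ℂ) 1 1)
      - algebraMap ℂ (Bn n) ((g : Matrix (Fin 2) (Fin 2) ℂ) 0 1)
        * algebraMap ℂ (Bn n) ((g : Matrix (Fin 2) (Fin 2) ℂ) 1 0) = 1 := by
    rw [← map_mul, ← map_mul, ← map_sub, hdet, map_one]
  simp only [pluck, map_sub, map_mul, act_xq]
  linear_combination
    (xq n u.1 0 u.2 * xq n v.1 1 v.2 - xq n u.1 1 u.2 * xq n v.1 0 v.2) * hdet'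

/-- The image of the trivialization endomorphism lies in the subalgebra generated
by the Plücker invariants. -/
lemma Ee_mem_adjoin {n : ℕ} (hn : 1 ≤ n) (y : Bn n) :
    Ee n hn y ∈ Algebra.adjoin ℂ
      (Set.range fun pr : ColPair n => pluck n pr.1.1 pr.1.2) := by
  set A := Algebra.adjoin ℂ
    (Set.range fun pr : ColPair n => pluck n pr.1.1 pr.1.2) with hA
  obtain ⟨p, rfl⟩ := Ideal.Quotient.mk_surjective y
  induction p using MvPolynomial.induction_on with
  | C r =>
    have : (Ideal.Quotient.mk (In n) (C r) : Bn n) = algebraMap ℂ (Bn n) r := rfl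
    rw [this, AlgHom.commutes]
    exact Subalgebra.algebraMap_mem A r
  | add p q hp hq =>
    rw [map_add, map_add]
    exact add_mem hp hq
  | mul_X p e hp =>
    rw [map_mul, map_mul]
    refine mul_mem hp ?_
    obtain ⟨i, r, c⟩ := e
    have hxqe : (Ideal.Quotient.mk (In n) (X (i, r, c)) : Bn n) = xq n i r c := rfl
    rw [hxqe]
    have hxq : Ee n hn (xq n i r c)
        = (M0 n hn) r 0 * xq n i 0 c + (M0 n hn) r 1 * xq n i 1 c := by
      have h := twist_xq (AlgHom.id ℂ (Bn n)) (M0 n hn) (detEq_M0 n hn) i r c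
      simpa [Ee] using h
    by_cases hi : i = (⟨0, hn⟩ : Fin n)
    · subst hi
      have hr := hrelB n (⟨0, hn⟩ : Fin n)
      fin_cases r <;> fin_cases c <;> simp only [Fin.zero_eta, Fin.mk_one] at hxq hxqe ⊢
      · have h1 : Ee n hn (xq n ⟨0, hn⟩ 0 0) = 1 := by
          rw [hxq]
          show xq n ⟨0, hn⟩ 1 1 * xq n ⟨0, hn⟩ 0 0
            + -xq n ⟨0, hn⟩ 0 1 * xq n ⟨0, hn⟩ 1 0 = 1
          linear_combination hr
        rw [h1]; exact one_mem A
      · have h1 : Ee n hn (xq n ⟨0, hn⟩ 0 1) = 0 := by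
          rw [hxq]
          show xq n ⟨0, hn⟩ 1 1 * xq n ⟨0, hn⟩ 0 1
            + -xq n ⟨0, hn⟩ 0 1 * xq n ⟨0, hn⟩ 1 1 = 0
          ring
        rw [h1]; exact zero_mem A
      · have h1 : Ee n hn (xq n ⟨0, hn⟩ 1 0) = 0 := by
          rw [hxq]
          show -xq n ⟨0, hn⟩ 1 0 * xq n ⟨0, hn⟩ 0 0
            + xq n ⟨0, hn⟩ 0 0 * xq n ⟨0, hn⟩ 1 0 = 0
          ring
        rw [h1]; exact zero_mem A
      · have h1 : Ee n hn (xq n ⟨0, hn⟩ 1 1) = 1 := by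
          rw [hxq]
          show -xq n ⟨0, hn⟩ 1 0 * xq n ⟨0, hn⟩ 0 1
            + xq n ⟨0, hn⟩ 0 0 * xq n ⟨0, hn⟩ 1 1 = 1
          linear_combination hr
        rw [h1]; exact one_mem A
    · have hipos : 1 ≤ i.val := by
        rcases Nat.eq_zero_or_pos i.val with h0 | h0
        · exact absurd (Fin.ext h0) hi
        · exact h0
      have hcol : ∀ a : Fin 2, colIdx n ((⟨0, hn⟩ : Fin n), a) < colIdx n (i, c) := by
        intro a
        simp only [colIdx]
        have ha2 : (a : ℕ) < 2 := a.isLt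
        omega
      fin_cases r <;> simp only [Fin.zero_eta, Fin.mk_one] at hxq hxqe ⊢
      · have h1 : Ee n hn (xq n i 0 c)
            = -pluck n ((⟨0, hn⟩ : Fin n), (1 : Fin 2)) (i, c) := by
          rw [hxq]
          show xq n ⟨0, hn⟩ 1 1 * xq n i 0 c + -xq n ⟨0, hn⟩ 0 1 * xq n i 1 c = _
          simp only [pluck]
          ring
        rw [h1]
        exact neg_mem (Algebra.subset_adjoin
          ⟨⟨(((⟨0, hn⟩ : Fin n), (1 : Fin 2)), (i, c)), hcol 1⟩, rfl⟩)
      · have h1 : Ee n hn (xq n i 1 c)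
            = pluck n ((⟨0, hn⟩ : Fin n), (0 : Fin 2)) (i, c) := by
          rw [hxq]
          show -xq n ⟨0, hn⟩ 1 0 * xq n i 0 c + xq n ⟨0, hn⟩ 0 0 * xq n i 1 c = _
          simp only [pluck]
          ring
        rw [h1]
        exact Algebra.subset_adjoin ⟨⟨(((⟨0, hn⟩ : Fin n), (0 : Fin 2)), (i, c)), hcol 0⟩, rfl⟩

/-! ### The relations ideal -/

noncomputable abbrev Jn (n : ℕ) : Ideal (MvPolynomial (ColPair n) ℂ) :=
  Ideal.span (plueckerRels n ∪ unitRels n)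

lemma unit_mem_Jn {n : ℕ} (i : Fin n) (h : colIdx n (i, 0) < colIdx n (i, 1)) :
    (X (⟨((i, 0), (i, 1)), h⟩ : ColPair n) - 1 : MvPolynomial (ColPair n) ℂ) ∈ Jn n :=
  Ideal.subset_span (Or.inr ⟨i, rfl⟩)

lemma pluecker_mem_Jn {n : ℕ} (c1 c2 c3 c4 : Fin n × Fin 2)
    (h12 : colIdx n c1 < colIdx n c2) (h23 : colIdx n c2 < colIdx n c3)
    (h34 : colIdx n c3 < colIdx n c4)
    (h14 : colIdx n c1 < colIdx n c4) (h13 : colIdx n c1 < colIdx n c3)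
    (h24 : colIdx n c2 < colIdx n c4) :
    (X (⟨(c1, c2), h12⟩ : ColPair n) * X (⟨(c3, c4), h34⟩ : ColPair n)
      + X (⟨(c1, c4), h14⟩ : ColPair n) * X (⟨(c2, c3), h23⟩ : ColPair n)
      - X (⟨(c1, c3), h13⟩ : ColPair n) * X (⟨(c2, c4), h24⟩ : ColPair n)) ∈ Jn n :=
  Ideal.subset_span (Or.inl ⟨c1, c2, c3, c4, h12, h23, h34, rfl⟩)

lemma col01 {n : ℕ} (i : Fin n) : colIdx n (i, (0 : Fin 2)) < colIdx n (i, (1 : Fin 2)) := by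
  show 2 * i.val + 0 < 2 * i.val + 1
  omega

/-- Normalization: modulo the relations, `X_{uv}` equals a quadratic expression in the
"first-column" variables, for `u` not a column of the 0-th matrix. -/
lemma norm_mem_Jn {n : ℕ} (hn : 1 ≤ n) (u v : Fin n × Fin 2)
    (h1u : colIdx n ((⟨0, hn⟩ : Fin n), (1 : Fin 2)) < colIdx n u)
    (huv : colIdx n u < colIdx n v)
    (h0u : colIdx n ((⟨0, hn⟩ : Fin n), (0 : Fin 2)) < colIdx n u)
    (h0v : colIdx n ((⟨0, hn⟩ : Fin n), (0 : Fin 2)) < colIdx n v)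
    (h1v : colIdx n ((⟨0, hn⟩ : Fin n), (1 : Fin 2)) < colIdx n v) :
    (X (⟨(u, v), huv⟩ : ColPair n)
      - (X (⟨((((⟨0, hn⟩ : Fin n)), (0 : Fin 2)), u), h0u⟩ : ColPair n)
          * X (⟨((((⟨0, hn⟩ : Fin n)), (1 : Fin 2)), v), h1v⟩ : ColPair n)
        - X (⟨((((⟨0, hn⟩ : Fin n)), (0 : Fin 2)), v), h0v⟩ : ColPair n)
          * X (⟨((((⟨0, hn⟩ : Fin n)), (1 : Fin 2)), u), h1u⟩ : ColPair n))) ∈ Jn n := by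
  have hr := pluecker_mem_Jn ((⟨0, hn⟩ : Fin n), (0 : Fin 2)) ((⟨0, hn⟩ : Fin n), (1 : Fin 2))
    u v (col01 _) h1u huv h0v h0u h1v
  have hu0 := unit_mem_Jn (⟨0, hn⟩ : Fin n) (col01 _)
  have heq : (X (⟨(u, v), huv⟩ : ColPair n)
      - (X (⟨((((⟨0, hn⟩ : Fin n)), (0 : Fin 2)), u), h0u⟩ : ColPair n)
          * X (⟨((((⟨0, hn⟩ : Fin n)), (1 : Fin 2)), v), h1v⟩ : ColPair n)
        - X (⟨((((⟨0, hn⟩ : Fin n)), (0 : Fin 2)), v), h0v⟩ : ColPair n)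
          * X (⟨((((⟨0, hn⟩ : Fin n)), (1 : Fin 2)), u), h1u⟩ : ColPair n)))
      = (X (⟨(((⟨0, hn⟩ : Fin n), (0 : Fin 2)), ((⟨0, hn⟩ : Fin n), (1 : Fin 2))),
            col01 _⟩ : ColPair n) * X (⟨(u, v), huv⟩ : ColPair n)
          + X (⟨((((⟨0, hn⟩ : Fin n)), (0 : Fin 2)), v), h0v⟩ : ColPair n)
            * X (⟨((((⟨0, hn⟩ : Fin n)), (1 : Fin 2)), u), h1u⟩ : ColPair n)
          - X (⟨((((⟨0, hn⟩ : Fin n)), (0 : Fin 2)), u), h0u⟩ : ColPair n)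
            * X (⟨((((⟨0, hn⟩ : Fin n)), (1 : Fin 2)), v), h1v⟩ : ColPair n))
        - X (⟨(u, v), huv⟩ : ColPair n)
          * (X (⟨(((⟨0, hn⟩ : Fin n), (0 : Fin 2)), ((⟨0, hn⟩ : Fin n), (1 : Fin 2))),
              col01 _⟩ : ColPair n) - (1 : MvPolynomial (ColPair n) ℂ)) := by
    ring
  rw [heq]
  exact sub_mem hr (Ideal.mul_mem_left _ _ hu0)

/-- The determinant relation among first-column variables holds modulo the relations. -/
lemma det_mem_Jn {n : ℕ} (hn : 1 ≤ n) (i : Fin n)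
    (h1i0 : colIdx n ((⟨0, hn⟩ : Fin n), (1 : Fin 2)) < colIdx n (i, (0 : Fin 2)))
    (h00 : colIdx n ((⟨0, hn⟩ : Fin n), (0 : Fin 2)) < colIdx n (i, (0 : Fin 2)))
    (h01 : colIdx n ((⟨0, hn⟩ : Fin n), (0 : Fin 2)) < colIdx n (i, (1 : Fin 2)))
    (h10 : colIdx n ((⟨0, hn⟩ : Fin n), (1 : Fin 2)) < colIdx n (i, (1 : Fin 2))) :
    (X (⟨((((⟨0, hn⟩ : Fin n)), (0 : Fin 2)), (i, (0 : Fin 2))), h00⟩ : ColPair n)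
        * X (⟨((((⟨0, hn⟩ : Fin n)), (1 : Fin 2)), (i, (1 : Fin 2))), h10⟩ : ColPair n)
      - X (⟨((((⟨0, hn⟩ : Fin n)), (0 : Fin 2)), (i, (1 : Fin 2))), h01⟩ : ColPair n)
        * X (⟨((((⟨0, hn⟩ : Fin n)), (1 : Fin 2)), (i, (0 : Fin 2))), h1i0⟩ : ColPair n)
      - 1) ∈ Jn n := by
  have hr := pluecker_mem_Jn ((⟨0, hn⟩ : Fin n), (0 : Fin 2)) ((⟨0, hn⟩ : Fin n), (1 : Fin 2))
    (i, (0 : Fin 2)) (i, (1 : Fin 2)) (col01 _) h1i0 (col01 _) h01 h00 h10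
  have hu0 := unit_mem_Jn (⟨0, hn⟩ : Fin n) (col01 _)
  have hui := unit_mem_Jn i (col01 _)
  have heq : (X (⟨((((⟨0, hn⟩ : Fin n)), (0 : Fin 2)), (i, (0 : Fin 2))), h00⟩ : ColPair n)
        * X (⟨((((⟨0, hn⟩ : Fin n)), (1 : Fin 2)), (i, (1 : Fin 2))), h10⟩ : ColPair n)
      - X (⟨((((⟨0, hn⟩ : Fin n)), (0 : Fin 2)), (i, (1 : Fin 2))), h01⟩ : ColPair n)
        * X (⟨((((⟨0, hn⟩ : Fin n)), (1 : Fin 2)), (i, (0 : Fin 2))), h1i0⟩ : ColPair n)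
      - 1)
      = -(X (⟨(((⟨0, hn⟩ : Fin n), (0 : Fin 2)), ((⟨0, hn⟩ : Fin n), (1 : Fin 2))),
            col01 _⟩ : ColPair n) * X (⟨((i, (0 : Fin 2)), (i, (1 : Fin 2))),
            col01 _⟩ : ColPair n)
          + X (⟨((((⟨0, hn⟩ : Fin n)), (0 : Fin 2)), (i, (1 : Fin 2))), h01⟩ : ColPair n)
            * X (⟨((((⟨0, hn⟩ : Fin n)), (1 : Fin 2)), (i, (0 : Fin 2))), h1i0⟩ : ColPair n)
          - X (⟨((((⟨0, hn⟩ : Fin n)), (0 : Fin 2)), (i, (0 : Fin 2))), h00⟩ : ColPair n)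
            * X (⟨((((⟨0, hn⟩ : Fin n)), (1 : Fin 2)), (i, (1 : Fin 2))), h10⟩ : ColPair n))
        + X (⟨((i, (0 : Fin 2)), (i, (1 : Fin 2))), col01 _⟩ : ColPair n)
          * (X (⟨(((⟨0, hn⟩ : Fin n), (0 : Fin 2)), ((⟨0, hn⟩ : Fin n), (1 : Fin 2))),
              col01 _⟩ : ColPair n) - (1 : MvPolynomial (ColPair n) ℂ))
        + (X (⟨((i, (0 : Fin 2)), (i, (1 : Fin 2))), col01 _⟩ : ColPair n)
            - (1 : MvPolynomial (ColPair n) ℂ)) := by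
    ring
  rw [heq]
  exact add_mem (add_mem (neg_mem hr) (Ideal.mul_mem_left _ _ hu0)) hui

/-- The value of the section `θ` on the entry variables. -/
noncomputable def tfun (n : ℕ) (hn : 1 ≤ n) (p : Ent n) :
    MvPolynomial (ColPair n) ℂ ⧸ Jn n :=
  if hi : p.1 = (⟨0, hn⟩ : Fin n) then (if p.2.1 = p.2.2 then 1 else 0)
  else if p.2.1 = 0 then
    -(Ideal.Quotient.mk (Jn n) (X (⟨(((⟨0, hn⟩ : Fin n), (1 : Fin 2)), (p.1, p.2.2)), by
      have h1 : 1 ≤ p.1.val := Nat.one_le_iff_ne_zero.mpr fun h => hi (Fin.ext h)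
      show 2 * 0 + 1 < 2 * p.1.val + (p.2.2).val
      omega⟩ : ColPair n)))
  else
    Ideal.Quotient.mk (Jn n) (X (⟨(((⟨0, hn⟩ : Fin n), (0 : Fin 2)), (p.1, p.2.2)), by
      have h1 : 1 ≤ p.1.val := Nat.one_le_iff_ne_zero.mpr fun h => hi (Fin.ext h)
      show 2 * 0 + 0 < 2 * p.1.val + (p.2.2).val
      omega⟩ : ColPair n))

/-- The section `θ : Bn n → ℂ[P]/J` (evaluation at `C₀ = 1`). -/
noncomputable def theta (n : ℕ) (hn : 1 ≤ n) :
    Bn n →ₐ[ℂ] (MvPolynomial (ColPair n) ℂ ⧸ Jn n) :=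
  Ideal.Quotient.liftₐ (In n) (MvPolynomial.aeval (tfun n hn)) (by
    intro a ha
    have hle : In n ≤ RingHom.ker (MvPolynomial.aeval (R := ℂ) (tfun n hn)) := by
      show Ideal.span (Set.range (reln n)) ≤ _
      rw [Ideal.span_le]
      rintro _ ⟨i, rfl⟩
      simp only [SetLike.mem_coe, RingHom.mem_ker, reln, map_sub, map_mul, map_one,
        MvPolynomial.aeval_X]
      by_cases hi : i = (⟨0, hn⟩ : Fin n)
      · subst hi
        simp [tfun]
      · have hp1 : 1 ≤ i.val := Nat.one_le_iff_ne_zero.mpr fun h => hi (Fin.ext h)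
        have h1i0 : colIdx n ((⟨0, hn⟩ : Fin n), (1 : Fin 2)) < colIdx n (i, (0 : Fin 2)) := by
          show 2 * 0 + 1 < 2 * i.val + 0; omega
        have h00 : colIdx n ((⟨0, hn⟩ : Fin n), (0 : Fin 2)) < colIdx n (i, (0 : Fin 2)) := by
          show 2 * 0 + 0 < 2 * i.val + 0; omega
        have h01 : colIdx n ((⟨0, hn⟩ : Fin n), (0 : Fin 2)) < colIdx n (i, (1 : Fin 2)) := by
          show 2 * 0 + 0 < 2 * i.val + 1; omega
        have h10 : colIdx n ((⟨0, hn⟩ : Fin n), (1 : Fin 2)) < colIdx n (i, (1 : Fin 2)) := by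
          show 2 * 0 + 1 < 2 * i.val + 1; omega
        have h0 : Ideal.Quotient.mk (Jn n)
            (X (⟨((((⟨0, hn⟩ : Fin n)), (0 : Fin 2)), (i, (0 : Fin 2))), h00⟩ : ColPair n)
              * X (⟨((((⟨0, hn⟩ : Fin n)), (1 : Fin 2)), (i, (1 : Fin 2))), h10⟩ : ColPair n)
            - X (⟨((((⟨0, hn⟩ : Fin n)), (0 : Fin 2)), (i, (1 : Fin 2))), h01⟩ : ColPair n)
              * X (⟨((((⟨0, hn⟩ : Fin n)), (1 : Fin 2)), (i, (0 : Fin 2))), h1i0⟩ : ColPair n)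
            - 1) = 0 :=
          Ideal.Quotient.eq_zero_iff_mem.mpr (det_mem_Jn hn i h1i0 h00 h01 h10)
        rw [map_sub, map_sub, map_mul, map_mul, map_one] at h0
        simp only [tfun, hi, dite_false, dif_neg hi]
        norm_num
        linear_combination h0
    exact hle ha)

lemma theta_xq {n : ℕ} (hn : 1 ≤ n) (i : Fin n) (r c : Fin 2) :
    theta n hn (xq n i r c) = tfun n hn (i, r, c) := by
  simp [theta, xq, Ideal.Quotient.liftₐ_apply, Ideal.Quotient.lift_mk]
  exact (Ideal.Quotient.lift_mk _ _ _).trans (by simp)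

/-- `θ` sends each Plücker invariant to the corresponding variable. -/
lemma theta_pluck {n : ℕ} (hn : 1 ≤ n) (pr : ColPair n) :
    theta n hn (pluck n pr.1.1 pr.1.2) = Ideal.Quotient.mk (Jn n) (X pr) := by
  obtain ⟨⟨⟨u1, u2⟩, ⟨v1, v2⟩⟩, huv⟩ := pr
  simp only [pluck, map_sub, map_mul, theta_xq]
  by_cases hu : u1 = (⟨0, hn⟩ : Fin n)
  · subst hu
    by_cases hv : v1 = (⟨0, hn⟩ : Fin n)
    · subst hv
      -- both columns of the 0-th matrix: forces u2 = 0, v2 = 1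
      have h2 : u2.val < v2.val := by
        have := huv
        simp only [colIdx] at this
        omega
      have hu2 : u2 = 0 := by
        have := v2.isLt
        exact Fin.ext (by omega)
      have hv2 : v2 = 1 := by
        have := v2.isLt
        have := u2.isLt
        exact Fin.ext (by omega)
      subst hu2; subst hv2
      have h0 : Ideal.Quotient.mk (Jn n)
          (X (⟨(((⟨0, hn⟩ : Fin n), (0 : Fin 2)), ((⟨0, hn⟩ : Fin n), (1 : Fin 2))),
            huv⟩ : ColPair n) - 1) = 0 :=
        Ideal.Quotient.eq_zero_iff_mem.mpr (unit_mem_Jn _ huv)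
      rw [map_sub, map_one] at h0
      simp only [tfun, dif_pos rfl]
      norm_num
      linear_combination -h0
    · -- u in matrix 0, v outside
      fin_cases u2 <;> simp only [Fin.zero_eta, Fin.mk_one] <;>
        · simp only [tfun, dif_pos rfl, hv, dite_false, dif_neg hv]
          norm_num
  · -- u outside matrix 0, hence v as well
    have hp1 : 1 ≤ u1.val := Nat.one_le_iff_ne_zero.mpr fun h => hu (Fin.ext h)
    have hv : ¬(v1 = (⟨0, hn⟩ : Fin n)) := by
      intro h
      subst h
      have h2 := huv
      simp only [colIdx] at h2
      have := v2.isLt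
      omega
    have hq1 : 1 ≤ v1.val := Nat.one_le_iff_ne_zero.mpr fun h => hv (Fin.ext h)
    have h1u : colIdx n ((⟨0, hn⟩ : Fin n), (1 : Fin 2)) < colIdx n (u1, u2) := by
      show 2 * 0 + 1 < 2 * u1.val + u2.val; omega
    have h0u : colIdx n ((⟨0, hn⟩ : Fin n), (0 : Fin 2)) < colIdx n (u1, u2) := by
      show 2 * 0 + 0 < 2 * u1.val + u2.val; omega
    have h0v : colIdx n ((⟨0, hn⟩ : Fin n), (0 : Fin 2)) < colIdx n (v1, v2) := by
      show 2 * 0 + 0 < 2 * v1.val + v2.val; omega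
    have h1v : colIdx n ((⟨0, hn⟩ : Fin n), (1 : Fin 2)) < colIdx n (v1, v2) := by
      show 2 * 0 + 1 < 2 * v1.val + v2.val; omega
    have h0 : Ideal.Quotient.mk (Jn n)
        (X (⟨((u1, u2), (v1, v2)), huv⟩ : ColPair n)
          - (X (⟨((((⟨0, hn⟩ : Fin n)), (0 : Fin 2)), (u1, u2)), h0u⟩ : ColPair n)
              * X (⟨((((⟨0, hn⟩ : Fin n)), (1 : Fin 2)), (v1, v2)), h1v⟩ : ColPair n)
            - X (⟨((((⟨0, hn⟩ : Fin n)), (0 : Fin 2)), (v1, v2)), h0v⟩ : ColPair n)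
              * X (⟨((((⟨0, hn⟩ : Fin n)), (1 : Fin 2)), (u1, u2)), h1u⟩ : ColPair n))) = 0 :=
      Ideal.Quotient.eq_zero_iff_mem.mpr (norm_mem_Jn hn (u1, u2) (v1, v2) h1u huv h0u h0v h1v)
    rw [map_sub, map_sub, map_mul, map_mul] at h0
    simp only [tfun, hu, hv, dite_false, dif_neg hu, dif_neg hv]
    norm_num
    linear_combination -h0

/-- The relations all lie in the kernel. -/
lemma Jn_le_ker (n : ℕ) :
    Jn n ≤ RingHom.ker (MvPolynomial.aeval (R := ℂ)
      fun pr : ColPair n => pluck n pr.1.1 pr.1.2) := by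
  rw [Ideal.span_le]
  rintro r (hr | hr)
  · obtain ⟨c1, c2, c3, c4, h12, h23, h34, rfl⟩ := hr
    simp only [SetLike.mem_coe, RingHom.mem_ker, map_add, map_sub, map_mul,
      MvPolynomial.aeval_X]
    simp only [pluck]
    ring
  · obtain ⟨i, rfl⟩ := hr
    simp only [SetLike.mem_coe, RingHom.mem_ker, map_sub, map_one, MvPolynomial.aeval_X]
    simp only [pluck]
    linear_combination hrelB n i

end Aux

/-- The subalgebra of Bₙ = ℂ[SL₂(ℂ)ⁿ] invariant under simultaneous left
multiplication by SL₂(ℂ) is generated by the Plücker invariants p_{(i,a),(j,b)},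
and the ideal of relations among them is generated by the Plücker relations
together with P_{(i,1),(i,2)} - 1. -/
theorem invariants_first_fundamental_theorem (n : ℕ) (hn : 1 ≤ n) :
    ({f : Bn n | ∀ g : Matrix.SpecialLinearGroup (Fin 2) ℂ, act n g f = f}
        = ((Algebra.adjoin ℂ
            (Set.range fun pr : ColPair n => pluck n pr.1.1 pr.1.2) :
              Subalgebra ℂ (Bn n)) : Set (Bn n))) ∧
      RingHom.ker
          (MvPolynomial.aeval (R := ℂ) fun pr : ColPair n => pluck n pr.1.1 pr.1.2)
        = Ideal.span (plueckerRels n ∪ unitRels n) := by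
  constructor
  · ext f
    simp only [Set.mem_setOf_eq, SetLike.mem_coe]
    constructor
    · intro hf
      have h1 := Ee_fixed hn hf
      rw [← h1]
      exact Ee_mem_adjoin hn f
    · intro hf g
      induction hf using Algebra.adjoin_induction with
      | mem x hx =>
        obtain ⟨pr, rfl⟩ := hx
        exact act_pluck g _ _
      | algebraMap r => exact (act n g).commutes r
      | add x y hx hy ihx ihy => rw [map_add, ihx, ihy]
      | mul x y hx hy ihx ihy => rw [map_mul, ihx, ihy]
  · apply le_antisymm
    · intro f hf
      rw [RingHom.mem_ker] at hf
      have hcomp : (theta n hn).comp (MvPolynomial.aeval (R := ℂ)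
          fun pr : ColPair n => pluck n pr.1.1 pr.1.2) = Ideal.Quotient.mkₐ ℂ (Jn n) := by
        apply MvPolynomial.algHom_ext
        intro pr
        simp only [AlgHom.comp_apply, MvPolynomial.aeval_X, Ideal.Quotient.mkₐ_eq_mk]
        exact theta_pluck hn pr
      have h2 := congrArg (fun ϕ => ϕ f) hcomp
      simp only [AlgHom.comp_apply, Ideal.Quotient.mkₐ_eq_mk] at h2
      rw [hf, map_zero] at h2
      exact Ideal.Quotient.eq_zero_iff_mem.mp h2.symm
    · exact Jn_le_ker n
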